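/- Let f(x₀,r) be a scalar-valued infinitely differentiable function on an open subset of ℝ² (variables x₀ and r, with r > 0). Then for every integer m ≥ 1, D_r(m){∂_r f} − ∂_r D^r(m){f} = (2m/r) · D^r(m){f}. -/

import Mathlib

noncomputable section

/-- Partial derivative with respect to the second variable `r` of a function on `ℝ²`. -/
def pr2 (g : ℝ × ℝ → ℝ) (p : ℝ × ℝ) : ℝ := fderiv ℝ g p (0, 1)

/-- The operator `D_r(m) = ((1/r) ∂_r)^m`. -/
def DrOp : ℕ → (ℝ × ℝ → ℝ) → (ℝ × ℝ → ℝ)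
  | 0, f => f
  | m + 1, f => fun p => (1 / p.2) * pr2 (DrOp m f) p

/-- The operator `D^r(m)`, defined by `D^r(0){f} = f` and `D^r(m){f} = ∂_r (D^r(m-1){f} / r)`. -/
def DRop : ℕ → (ℝ × ℝ → ℝ) → (ℝ × ℝ → ℝ)
  | 0, f => f
  | m + 1, f => fun p => pr2 (fun q => DRop m f q / q.2) p

lemma pr2_congr {g₁ g₂ : ℝ × ℝ → ℝ} {U : Set (ℝ × ℝ)} (hU : IsOpen U) {p : ℝ × ℝ}
    (hp : p ∈ U) (h : ∀ q ∈ U, g₁ q = g₂ q) : pr2 g₁ p = pr2 g₂ p := by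
  unfold pr2
  congr 1
  apply Filter.EventuallyEq.fderiv_eq
  filter_upwards [hU.mem_nhds hp] with q hq using h q hq

lemma pr2_contDiffOn {g : ℝ × ℝ → ℝ} {U : Set (ℝ × ℝ)} (hU : IsOpen U)
    (hg : ContDiffOn ℝ (⊤ : ℕ∞) g U) : ContDiffOn ℝ (⊤ : ℕ∞) (pr2 g) U :=
  (hg.fderiv_of_isOpen hU (by simp)).clm_apply contDiffOn_const

lemma diffAt {g : ℝ × ℝ → ℝ} {U : Set (ℝ × ℝ)} (hU : IsOpen U)
    (hg : ContDiffOn ℝ (⊤ : ℕ∞) g U) {p : ℝ × ℝ} (hp : p ∈ U) :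
    DifferentiableAt ℝ g p :=
  (hg.differentiableOn (by simp)).differentiableAt (hU.mem_nhds hp)

lemma pr2_add {g₁ g₂ : ℝ × ℝ → ℝ} {p : ℝ × ℝ} (h₁ : DifferentiableAt ℝ g₁ p)
    (h₂ : DifferentiableAt ℝ g₂ p) :
    pr2 (fun q => g₁ q + g₂ q) p = pr2 g₁ p + pr2 g₂ p := by
  unfold pr2; rw [fderiv_fun_add h₁ h₂]; rfl

lemma pr2_sub {g₁ g₂ : ℝ × ℝ → ℝ} {p : ℝ × ℝ} (h₁ : DifferentiableAt ℝ g₁ p)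
    (h₂ : DifferentiableAt ℝ g₂ p) :
    pr2 (fun q => g₁ q - g₂ q) p = pr2 g₁ p - pr2 g₂ p := by
  unfold pr2; rw [fderiv_fun_sub h₁ h₂]; rfl

lemma pr2_const_mul {g : ℝ × ℝ → ℝ} {p : ℝ × ℝ} (h : DifferentiableAt ℝ g p) (c : ℝ) :
    pr2 (fun q => c * g q) p = c * pr2 g p := by
  unfold pr2; rw [fderiv_const_mul h c]; rfl

lemma pr2_inv_snd {p : ℝ × ℝ} (hr : p.2 ≠ 0) :
    pr2 (fun q : ℝ × ℝ => (q.2)⁻¹) p = -(p.2 ^ 2)⁻¹ := by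
  have h : (fun q : ℝ × ℝ => (q.2)⁻¹) = (fun x : ℝ => x⁻¹) ∘ Prod.snd := rfl
  unfold pr2
  rw [h, fderiv_comp p (differentiableAt_inv hr) differentiableAt_snd]
  simp [fderiv_inv, fderiv_snd]

lemma pr2_div_snd {g : ℝ × ℝ → ℝ} {p : ℝ × ℝ} (hg : DifferentiableAt ℝ g p)
    (hr : p.2 ≠ 0) :
    pr2 (fun q => g q / q.2) p = pr2 g p / p.2 - g p / p.2 ^ 2 := by
  have h : (fun q : ℝ × ℝ => g q / q.2) = fun q => g q * (q.2)⁻¹ := by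
    funext q; rw [div_eq_mul_inv]
  have hinv : DifferentiableAt ℝ (fun q : ℝ × ℝ => (q.2)⁻¹) p :=
    (differentiableAt_inv hr).comp p differentiableAt_snd
  rw [h]
  have : pr2 (fun q => g q * (q.2)⁻¹) p
      = pr2 g p * (p.2)⁻¹ + g p * pr2 (fun q : ℝ × ℝ => (q.2)⁻¹) p := by
    unfold pr2
    rw [fderiv_fun_mul hg hinv]
    simp [mul_comm]
    ring
  rw [this, pr2_inv_snd hr]
  field_simp
  ring

lemma DRop_contDiffOn {f : ℝ × ℝ → ℝ} {U : Set (ℝ × ℝ)} (hU : IsOpen U)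
    (hUpos : U ⊆ {p : ℝ × ℝ | 0 < p.2}) (hf : ContDiffOn ℝ (⊤ : ℕ∞) f U) :
    ∀ m, ContDiffOn ℝ (⊤ : ℕ∞) (DRop m f) U := by
  intro m
  induction m with
  | zero => exact hf
  | succ m ih =>
    show ContDiffOn ℝ (⊤ : ℕ∞) (fun p => pr2 (fun q => DRop m f q / q.2) p) U
    exact pr2_contDiffOn hU (ih.div contDiff_snd.contDiffOn
      (fun q hq => (hUpos hq).ne'))

/-- Lemma 3.1 (iv): `D_r(m){∂_r f} − ∂_r D^r(m){f} = (2m/r) · D^r(m){f}`. -/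
theorem DrOp_partial_r_sub (f : ℝ × ℝ → ℝ) (U : Set (ℝ × ℝ)) (hU : IsOpen U)
    (hUpos : U ⊆ {p : ℝ × ℝ | 0 < p.2}) (hf : ContDiffOn ℝ (⊤ : ℕ∞) f U)
    (m : ℕ) (hm : 1 ≤ m) :
    ∀ p ∈ U, DrOp m (fun q => pr2 f q) p - pr2 (DRop m f) p
      = (2 * (m : ℝ) / p.2) * DRop m f p := by

  clear hm
  induction m with
  | zero =>
    intro p hp
    push_cast
    show pr2 f p - pr2 f p = (2 * (0:ℝ) / p.2) * f p
    simp
  | succ m ih =>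
    intro p hp
    have hr : p.2 ≠ 0 := (hUpos hp).ne'
    set B := DRop m f with hBdef
    have hB : ContDiffOn ℝ (⊤ : ℕ∞) B U := DRop_contDiffOn hU hUpos hf m
    have hB' : ContDiffOn ℝ (⊤ : ℕ∞) (pr2 B) U := pr2_contDiffOn hU hB
    have hC : ContDiffOn ℝ (⊤ : ℕ∞) (fun q => B q / q.2) U :=
      hB.div contDiff_snd.contDiffOn (fun q hq => (hUpos hq).ne')
    set C := fun q : ℝ × ℝ => B q / q.2 with hCdef
    -- Step 1: rewrite pr2 of DrOp m (pr2 f) at p using IH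
    have hA : pr2 (DrOp m fun q => pr2 f q) p
        = pr2 (pr2 B) p + 2 * (m : ℝ) * pr2 C p := by
      have h1 : pr2 (DrOp m fun q => pr2 f q) p
          = pr2 (fun q => pr2 B q + 2 * (m : ℝ) * C q) p := by
        apply pr2_congr hU hp
        intro q hq
        have := ih q hq
        have hq2 : q.2 ≠ 0 := (hUpos hq).ne'
        simp only [hCdef]
        field_simp at this ⊢
        linarith
      rw [h1, pr2_add (diffAt hU hB' hp)
        ((diffAt hU hC hp).const_mul _),
        pr2_const_mul (diffAt hU hC hp)]
    -- Step 2: pr2 C on U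
    have hCq : ∀ q ∈ U, pr2 C q = pr2 B q / q.2 - C q / q.2 := by
      intro q hq
      have hq2 : q.2 ≠ 0 := (hUpos hq).ne'
      rw [hCdef, pr2_div_snd (diffAt hU hB hq) hq2]
      field_simp
    have hC' : ContDiffOn ℝ (⊤ : ℕ∞) (pr2 C) U := pr2_contDiffOn hU hC
    have hD1 : ContDiffOn ℝ (⊤ : ℕ∞) (fun q => pr2 B q / q.2) U :=
      hB'.div contDiff_snd.contDiffOn (fun q hq => (hUpos hq).ne')
    have hD2 : ContDiffOn ℝ (⊤ : ℕ∞) (fun q => C q / q.2) U :=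
      hC.div contDiff_snd.contDiffOn (fun q hq => (hUpos hq).ne')
    have hppC : pr2 (pr2 C) p
        = (pr2 (pr2 B) p / p.2 - pr2 B p / p.2 ^ 2)
          - (pr2 C p / p.2 - C p / p.2 ^ 2) := by
      have h1 : pr2 (pr2 C) p
          = pr2 (fun q => pr2 B q / q.2 - C q / q.2) p :=
        pr2_congr hU hp hCq
      rw [h1, pr2_sub (diffAt hU hD1 hp) (diffAt hU hD2 hp),
        pr2_div_snd (diffAt hU hB' hp) hr,
        pr2_div_snd (diffAt hU hC hp) hr]
    -- now the goal
    push_cast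
    show (1 / p.2) * pr2 (DrOp m fun q => pr2 f q) p - pr2 (pr2 C) p
      = (2 * ((m : ℝ) + 1) / p.2) * pr2 C p
    rw [hA, hppC, hCq p hp]
    have hCp : C p = B p / p.2 := rfl
    rw [hCp]
    field_simp
    ring
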